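/- The sequence (H_m/m)_{m≥1} is strictly decreasing: for every positive integer m one has H_m/m > H_{m+1}/(m+1). -/

import Mathlib

open scoped BigOperators
open Real Finset

noncomputable def Sb (m : ℕ) : ℝ :=
  ∑ j ∈ Finset.range (m + 1), (m.choose j : ℝ) * Real.log (m.choose j)

noncomputable def Eb (k : ℕ) : ℝ :=
  ∑ j ∈ Finset.range (k + 1), (k.choose j : ℝ) * Real.binEntropy ((j : ℝ) / k)

/-- key scalar identity -/
lemma xlogx_add (a b : ℝ) (ha : 0 ≤ a) (hb : 0 ≤ b) (hab : 0 < a + b) :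
    (a + b) * Real.log (a + b)
      = a * Real.log a + b * Real.log b + (a + b) * Real.binEntropy (a / (a + b)) := by
  have h1 : (1 : ℝ) - a / (a + b) = b / (a + b) := by field_simp; ring
  rw [Real.binEntropy, h1]
  rcases eq_or_lt_of_le ha with ha0 | ha0
  · have hb' : b ≠ 0 := by rw [← ha0] at hab; simpa using hab.ne'
    simp [← ha0, div_self hb']
  rcases eq_or_lt_of_le hb with hb0 | hb0
  · have ha' : a ≠ 0 := ha0.ne'
    simp [← hb0, div_self ha']
  rw [Real.log_inv, Real.log_inv, Real.log_div ha0.ne' hab.ne', Real.log_div hb0.ne' hab.ne']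
  field_simp
  ring

lemma Sb_succ (m : ℕ) : Sb (m + 1) = 2 * Sb m + Eb (m + 1) := by
  set G : ℕ → ℝ := fun j => (m.choose j : ℝ) * Real.log (m.choose j) with hG
  have e1 : Sb (m+1) = ∑ j ∈ Finset.range (m+1),
      ((m+1).choose (j+1) : ℝ) * Real.log ((m+1).choose (j+1)) := by
    rw [Sb, Finset.sum_range_succ']; simp
  have e2 : Eb (m+1) = ∑ j ∈ Finset.range (m+1),
      ((m+1).choose (j+1) : ℝ) * Real.binEntropy (((j:ℝ)+1) / ((m:ℝ)+1)) := by
    rw [Eb, Finset.sum_range_succ']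
    push_cast
    simp
  have e3 : ∑ j ∈ Finset.range (m+1), G (j+1) = Sb m := by
    have h1 := Finset.sum_range_succ' G (m+1)
    have h2 := Finset.sum_range_succ G (m+1)
    have hg0 : G 0 = 0 := by simp [hG]
    have hgm : G (m+1) = 0 := by simp [hG, Nat.choose_succ_self]
    have hSb : Sb m = ∑ j ∈ Finset.range (m+1), G j := rfl
    rw [h2, hg0, hgm] at h1
    rw [hSb]; linarith
  have pt : ∀ j ∈ Finset.range (m+1),
      ((m+1).choose (j+1) : ℝ) * Real.log ((m+1).choose (j+1))
        = G j + G (j+1)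
          + ((m+1).choose (j+1) : ℝ) * Real.binEntropy (((j:ℝ)+1) / ((m:ℝ)+1)) := by
    intro j hj
    have hj' : j < m + 1 := Finset.mem_range.mp hj
    have hpas : ((m+1).choose (j+1) : ℝ) = (m.choose j : ℝ) + (m.choose (j+1) : ℝ) := by
      exact_mod_cast congrArg (Nat.cast : ℕ → ℝ) (Nat.choose_succ_succ m j)
    have hpos : (0:ℝ) < (m.choose j : ℝ) + (m.choose (j+1) : ℝ) := by
      rw [← hpas]
      exact_mod_cast Nat.choose_pos (by omega : j + 1 ≤ m + 1)
    have hI1 : ((m:ℝ)+1) * (m.choose j : ℝ) = ((m+1).choose (j+1) : ℝ) * ((j:ℝ)+1) := by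
      exact_mod_cast Nat.add_one_mul_choose_eq m j
    have hratio : (m.choose j : ℝ) / ((m.choose j : ℝ) + (m.choose (j+1) : ℝ))
        = ((j:ℝ)+1) / ((m:ℝ)+1) := by
      rw [div_eq_div_iff hpos.ne' (by positivity : ((m:ℝ)+1) ≠ 0), ← hpas]
      linear_combination hI1
    have := xlogx_add (m.choose j : ℝ) (m.choose (j+1) : ℝ)
      (by positivity) (by positivity) hpos
    rw [hpas, this, hratio, hG]
  rw [e1, Finset.sum_congr rfl pt, e2]
  have hSb : Sb m = ∑ j ∈ Finset.range (m+1), G j := rfl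
  rw [Finset.sum_add_distrib, Finset.sum_add_distrib, e3, ← hSb]
  ring

lemma key_strict (k t : ℕ) (ht : t < k) :
    (k.choose t : ℝ) * Real.binEntropy ((t:ℝ) / k)
      + (k.choose (t+1) : ℝ) * Real.binEntropy (((t:ℝ)+1) / k)
      < ((k+1).choose (t+1) : ℝ) * Real.binEntropy (((t:ℝ)+1) / ((k:ℝ)+1)) := by
  have hk : 0 < k := by omega
  have hkR : (0:ℝ) < k := by exact_mod_cast hk
  have htk : (t:ℝ) < k := by exact_mod_cast ht
  set x : ℝ := (t:ℝ) / k with hx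
  set y : ℝ := ((t:ℝ)+1) / k with hy
  have hxmem : x ∈ Set.Icc (0:ℝ) 1 := by
    constructor
    · positivity
    · rw [div_le_one hkR]; linarith
  have hymem : y ∈ Set.Icc (0:ℝ) 1 := by
    constructor
    · positivity
    · rw [div_le_one hkR]
      have : (t:ℝ) + 1 ≤ k := by exact_mod_cast ht
      linarith
  have hxy : x ≠ y := by
    have : x < y := by
      rw [hx, hy]
      apply div_lt_div_of_pos_right ?_ hkR
      linarith
    exact this.ne
  set a : ℝ := ((t:ℝ)+1) / ((k:ℝ)+1) with ha
  set b : ℝ := ((k:ℝ)-t) / ((k:ℝ)+1) with hb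
  have ha0 : 0 < a := by positivity
  have hb0 : 0 < b := by rw [hb]; exact div_pos (by linarith) (by positivity)
  have hab : a + b = 1 := by rw [ha, hb]; field_simp; ring
  have hcomb : a * x + b * y = ((t:ℝ)+1) / ((k:ℝ)+1) := by
    rw [ha, hb, hx, hy]; field_simp; ring
  have hconc := Real.strictConcave_binEntropy.2 hxmem hymem hxy ha0 hb0 hab
  rw [smul_eq_mul, smul_eq_mul, smul_eq_mul, smul_eq_mul, hcomb] at hconc
  -- multiply by C(k+1,t+1) > 0
  have hCpos : (0:ℝ) < ((k+1).choose (t+1) : ℝ) := by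
    exact_mod_cast Nat.choose_pos (by omega : t + 1 ≤ k + 1)
  have hI1 : ((k:ℝ)+1) * (k.choose t : ℝ) = ((k+1).choose (t+1) : ℝ) * ((t:ℝ)+1) := by
    exact_mod_cast Nat.add_one_mul_choose_eq k t
  have hpas : ((k+1).choose (t+1) : ℝ) = (k.choose t : ℝ) + (k.choose (t+1) : ℝ) := by
    exact_mod_cast congrArg (Nat.cast : ℕ → ℝ) (Nat.choose_succ_succ k t)
  have hwa : ((k+1).choose (t+1) : ℝ) * a = (k.choose t : ℝ) := by
    rw [ha]
    rw [← mul_div_assoc, div_eq_iff (by positivity : ((k:ℝ)+1) ≠ 0)]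
    linear_combination -hI1
  have hwb : ((k+1).choose (t+1) : ℝ) * b = (k.choose (t+1) : ℝ) := by
    rw [hb]
    rw [← mul_div_assoc, div_eq_iff (by positivity : ((k:ℝ)+1) ≠ 0)]
    linear_combination ((k:ℝ)+1) * hpas + hI1
  have h2 : (k.choose t : ℝ) * Real.binEntropy x + (k.choose (t+1) : ℝ) * Real.binEntropy y
      = ((k+1).choose (t+1) : ℝ) * (a * Real.binEntropy x + b * Real.binEntropy y) := by
    rw [← hwa, ← hwb]; ring
  rw [h2]
  exact mul_lt_mul_of_pos_left hconc hCpos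

lemma Eb_lt (k : ℕ) (hk : 1 ≤ k) : 2 * Eb k < Eb (k + 1) := by
  set B : ℕ → ℝ := fun j => (k.choose j : ℝ) * Real.binEntropy ((j:ℝ) / k) with hB
  have hkR : (0:ℝ) < k := by exact_mod_cast hk
  have e1 : Eb (k+1) = ∑ t ∈ Finset.range (k+1),
      ((k+1).choose (t+1) : ℝ) * Real.binEntropy (((t:ℝ)+1) / ((k:ℝ)+1)) := by
    rw [Eb, Finset.sum_range_succ']
    push_cast
    simp
  have e3 : ∑ t ∈ Finset.range (k+1), B (t+1) = Eb k := by
    have h1 := Finset.sum_range_succ' B (k+1)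
    have h2 := Finset.sum_range_succ B (k+1)
    have hg0 : B 0 = 0 := by simp [hB]
    have hgm : B (k+1) = 0 := by simp [hB, Nat.choose_succ_self]
    have hEb : Eb k = ∑ j ∈ Finset.range (k+1), B j := rfl
    rw [h2, hg0, hgm] at h1
    rw [hEb]; linarith
  have e2 : 2 * Eb k = ∑ t ∈ Finset.range (k+1), (B t + B (t+1)) := by
    rw [Finset.sum_add_distrib, e3]
    have hEb : Eb k = ∑ j ∈ Finset.range (k+1), B j := rfl
    rw [← hEb]; ring
  rw [e1, e2]
  apply Finset.sum_lt_sum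
  · intro t htm
    have ht' : t < k + 1 := Finset.mem_range.mp htm
    rcases Nat.lt_or_ge t k with ht | ht
    · have h := key_strict k t ht
      have hBt : B t = (k.choose t : ℝ) * Real.binEntropy ((t:ℝ)/k) := rfl
      have hBt1 : B (t+1) = (k.choose (t+1) : ℝ) * Real.binEntropy (((t:ℝ)+1)/k) := by
        simp [hB]
      rw [hBt, hBt1]
      exact h.le
    · have htk : t = k := by omega
      subst htk
      have h1 : B t = 0 := by
        simp [hB, div_self hkR.ne']
      have h2 : B (t+1) = 0 := by simp [hB, Nat.choose_succ_self]
      have h3 : ((t:ℝ)+1) / ((t:ℝ)+1) = 1 := by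
        rw [div_self]; positivity
      rw [h1, h2, h3]
      simp
  · refine ⟨0, Finset.mem_range.mpr (by omega), ?_⟩
    have h := key_strict k 0 hk
    have hB0 : B 0 = 0 := by simp [hB]
    have hB1 : B 1 = (k.choose 1 : ℝ) * Real.binEntropy (((0:ℝ)+1)/k) := by
      simp [hB]
    rw [hB0, hB1]
    simpa using h

lemma two_Sb_lt (m : ℕ) (hm : 1 ≤ m) : 2 * Sb m < m * Eb (m + 1) := by
  induction m, hm using Nat.le_induction with
  | base =>
    have hS1 : Sb 1 = 0 := by
      simp [Sb, Finset.sum_range_succ]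
    have hE2 : 0 < Eb 2 := by
      have : Eb 2 = 2 * Real.log 2 := by
        simp [Eb, Finset.sum_range_succ]
      rw [this]
      have := Real.log_pos (by norm_num : (1:ℝ) < 2)
      linarith
    rw [hS1]
    push_cast
    linarith
  | succ n hn ih =>
    have h1 := Sb_succ n
    have h2 := Eb_lt (n+1) (by omega)
    have hEpos : 0 < Eb (n+1+1) - 2 * Eb (n+1) := by linarith
    push_cast
    rw [h1]
    have hnR : (1:ℝ) ≤ n := by exact_mod_cast hn
    nlinarith [ih]

/-- `H_m`: the Shannon entropy of the symmetric binomial distribution `B(m,1/2)`. -/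
noncomputable def Hm (m : ℕ) : ℝ :=
  -∑ j ∈ Finset.range (m + 1),
    ((m.choose j : ℝ) / 2 ^ m) * Real.logb 2 ((m.choose j : ℝ) / 2 ^ m)

lemma Hm_eq (m : ℕ) : Hm m = m - Sb m / (2 ^ m * Real.log 2) := by
  have hl2 : 0 < Real.log 2 := Real.log_pos (by norm_num)
  have h2m : (0:ℝ) < 2 ^ m := by positivity
  have hsum : ∑ j ∈ Finset.range (m+1), (m.choose j : ℝ) = 2 ^ m := by
    exact_mod_cast Nat.sum_range_choose m
  have pt : ∀ j ∈ Finset.range (m+1),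
      ((m.choose j : ℝ) / 2 ^ m) * Real.logb 2 ((m.choose j : ℝ) / 2 ^ m)
        = ((m.choose j : ℝ) * Real.log (m.choose j)) / (2 ^ m * Real.log 2)
          - (m.choose j : ℝ) * m / 2 ^ m := by
    intro j hj
    have hj' : j ≤ m := by have := Finset.mem_range.mp hj; omega
    have hC : (0:ℝ) < (m.choose j : ℝ) := by exact_mod_cast Nat.choose_pos hj'
    rw [Real.logb, Real.log_div hC.ne' h2m.ne', Real.log_pow]
    push_cast
    field_simp
  rw [Hm, Finset.sum_congr rfl pt, Finset.sum_sub_distrib, ← Finset.sum_div, ← Finset.sum_div,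
    ← Finset.sum_mul, hsum]
  have hSb : Sb m = ∑ j ∈ Finset.range (m+1), (m.choose j : ℝ) * Real.log (m.choose j) := rfl
  rw [← hSb]
  field_simp
  ring

theorem binomial_entropy_ratio_strict_anti (m : ℕ) (hm : 1 ≤ m) :
    Hm (m + 1) / ((m : ℝ) + 1) < Hm m / (m : ℝ) := by
  have hl2 : 0 < Real.log 2 := Real.log_pos (by norm_num)
  have hmR : (0:ℝ) < m := by exact_mod_cast hm
  have h2m : (0:ℝ) < 2 ^ m := by positivity
  have hkey := two_Sb_lt m hm
  have hrec := Sb_succ m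
  rw [div_lt_div_iff₀ (by positivity) hmR, Hm_eq, Hm_eq]
  push_cast
  have hmain : ((m:ℝ)+1) * (Sb m / (2 ^ m * Real.log 2))
      < (m:ℝ) * (Sb (m+1) / (2 ^ (m+1) * Real.log 2)) := by
    rw [hrec, ← mul_div_assoc, ← mul_div_assoc, div_lt_div_iff₀ (by positivity) (by positivity),
      pow_succ]
    nlinarith [mul_lt_mul_of_pos_left hkey (mul_pos h2m hl2)]
  nlinarith [hmain]
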